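/- The solution x̂(φ,h,b) is monotone increasing in each of its parameters: if φ1 ≤ φ2 in (0,1], h1 ≤ h2 with h1, h2 > 1, and b1 ≤ b2 in (0,1), with both triples satisfying 2/(φ_k·(h_k-1)+2) < b_k < 1 (k = 1,2), then x̂(φ1,h1,b1) ≤ x̂(φ2,h2,b2). -/

import Mathlib

/-- `sinh` is strictly convex on `[0, ∞)`. -/
lemma sinh_strictConvexOn' : StrictConvexOn ℝ (Set.Ici (0:ℝ)) Real.sinh := by
  apply strictConvexOn_of_deriv2_pos (convex_Ici 0) Real.continuous_sinh.continuousOn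
  intro x hx
  rw [interior_Ici, Set.mem_Ioi] at hx
  show 0 < deriv (deriv Real.sinh) x
  rw [Real.deriv_sinh, Real.deriv_cosh]
  exact Real.sinh_pos_iff.mpr hx

lemma sinh_mul_lt' {c s : ℝ} (hc0 : 0 < c) (hc1 : c < 1) (hs : 0 < s) :
    Real.sinh (c * s) < c * Real.sinh s := by
  have h := sinh_strictConvexOn'.2 (Set.self_mem_Ici (a := (0:ℝ))) (Set.mem_Ici.mpr hs.le)
      hs.ne (show (0:ℝ) < 1 - c by linarith) hc0 (show (1 - c) + c = 1 by ring)
  simpa [Real.sinh_zero] using h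

/-- Core inequality: `r (u² - 1) < c u (r² - 1)` for `u = r^c`, `r > 1`, `0 < c < 1`. -/
lemma key_ineq' {r c : ℝ} (hr : 1 < r) (hc0 : 0 < c) (hc1 : c < 1) :
    r * (r ^ c * r ^ c - 1) < c * r ^ c * (r * r - 1) := by
  have hr0 : (0:ℝ) < r := by linarith
  have hs : 0 < Real.log r := Real.log_pos hr
  have hu : r ^ c = Real.exp (c * Real.log r) := by rw [Real.rpow_def_of_pos hr0, mul_comm]
  have hu0 : (0:ℝ) < r ^ c := Real.rpow_pos_of_pos hr0 c
  have hsinh := sinh_mul_lt' hc0 hc1 hs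
  rw [Real.sinh_eq, Real.sinh_eq, Real.exp_neg, Real.exp_neg, Real.exp_log hr0, ← hu] at hsinh
  have h1 : r ^ c - (r ^ c)⁻¹ < c * (r - r⁻¹) := by ring_nf at hsinh ⊢; linarith
  have e1 : r ^ c - (r ^ c)⁻¹ = (r ^ c * r ^ c - 1) / r ^ c := by
    field_simp
  have e2 : r - r⁻¹ = (r * r - 1) / r := by field_simp
  rw [e1, e2, div_lt_iff₀ hu0] at h1
  have h3 := mul_lt_mul_of_pos_left h1 hr0
  have e3 : r * (c * ((r * r - 1) / r) * r ^ c) = c * r ^ c * (r * r - 1) := by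
    field_simp
  linarith [e3 ▸ h3]

lemma rpow_lt_self' {r c : ℝ} (hr : 1 < r) (hc1 : c < 1) : r ^ c < r := by
  nth_rewrite 2 [← Real.rpow_one r]
  exact Real.rpow_lt_rpow_of_exponent_lt hr hc1

lemma hasDerivG' {c : ℝ} {r : ℝ} (hc1 : c < 1) (hr : 1 < r) :
    HasDerivAt (fun r : ℝ => (1 + r) * (r ^ c - 1) / (r - r ^ c))
      (((1 * (r ^ c - 1) + (1 + r) * (c * r ^ (c - 1))) * (r - r ^ c) -
        (1 + r) * (r ^ c - 1) * (1 - c * r ^ (c - 1))) / (r - r ^ c) ^ 2) r := by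
  have hr0 : (0:ℝ) < r := by linarith
  have hpow : HasDerivAt (fun r : ℝ => r ^ c) (c * r ^ (c - 1)) r :=
    Real.hasDerivAt_rpow_const (Or.inl hr0.ne')
  have hnum : HasDerivAt (fun r : ℝ => (1 + r) * (r ^ c - 1))
      (1 * (r ^ c - 1) + (1 + r) * (c * r ^ (c - 1))) r :=
    (((hasDerivAt_id r).const_add 1)).mul (hpow.sub_const 1)
  have hden : HasDerivAt (fun r : ℝ => r - r ^ c) (1 - c * r ^ (c - 1)) r :=
    (hasDerivAt_id r).sub hpow
  have hdne : r - r ^ c ≠ 0 := by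
    have := rpow_lt_self' hr hc1; linarith
  exact hnum.div hden hdne

lemma derivG_pos' {c r : ℝ} (hc0 : 0 < c) (hc1 : c < 1) (hr : 1 < r) :
    0 < ((1 * (r ^ c - 1) + (1 + r) * (c * r ^ (c - 1))) * (r - r ^ c) -
        (1 + r) * (r ^ c - 1) * (1 - c * r ^ (c - 1))) / (r - r ^ c) ^ 2 := by
  have hr0 : (0:ℝ) < r := by linarith
  have hur : r ^ c < r := rpow_lt_self' hr hc1
  have hvu : r ^ c = r ^ (c - 1) * r := by
    rw [← Real.rpow_add_one hr0.ne' (c - 1)]; ring_nf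
  have hkey := key_ineq' hr hc0 hc1
  rw [hvu] at hkey ⊢
  apply div_pos _ (by nlinarith [hur, hvu])
  nlinarith [hkey, hr0]

/-- The function `r ↦ (1+r)(r^c - 1)/(r - r^c)` is strictly increasing on `(1,∞)`. -/
lemma G_strictMonoOn' {c : ℝ} (hc0 : 0 < c) (hc1 : c < 1) :
    StrictMonoOn (fun r : ℝ => (1 + r) * (r ^ c - 1) / (r - r ^ c)) (Set.Ioi 1) := by
  apply strictMonoOn_of_deriv_pos (convex_Ioi 1)
  · exact fun r hr => (hasDerivG' hc1 hr).continuousAt.continuousWithinAt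
  · intro r hr
    rw [interior_Ioi, Set.mem_Ioi] at hr
    rw [(hasDerivG' hc1 hr).deriv]
    exact derivG_pos' hc0 hc1 hr

/-- The function `g(x,b)` of the paper, for `b ∈ (0,1)`:
`g(x,b) = (x^{1-b} - (1-x)^{1-b}) / (x·(1-x)^{1-b} - (1-x)·x^{1-b})` for
`x ∈ (1/2,1)` and `g(1/2,b) = 2/b - 2`. -/
noncomputable def g (x b : ℝ) : ℝ :=
  if x = 1 / 2 then 2 / b - 2
  else (x ^ (1 - b) - (1 - x) ^ (1 - b)) /
    (x * (1 - x) ^ (1 - b) - (1 - x) * x ^ (1 - b))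

/-- For `x ∈ (1/2,1)`, `g(x,b) = (1+r)(r^{1-b}-1)/(r - r^{1-b})` with `r = x/(1-x)`. -/
lemma g_eq' {x b : ℝ} (hx1 : 1 / 2 < x) (hx2 : x < 1) (hb0 : 0 < b) (hb1 : b < 1) :
    g x b = (1 + x / (1 - x)) * ((x / (1 - x)) ^ (1 - b) - 1) /
      (x / (1 - x) - (x / (1 - x)) ^ (1 - b)) := by
  have hq : 0 < 1 - x := by linarith
  have hx0 : (0:ℝ) < x := by linarith
  have hne : x ≠ 1 / 2 := by intro h; rw [h] at hx1; linarith
  set r := x / (1 - x) with hrdef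
  have hr1 : 1 < r := (one_lt_div hq).mpr (by linarith)
  have hxr : x = r * (1 - x) := by rw [hrdef, div_mul_cancel₀ _ hq.ne']
  have h1r : (1 - x) * (1 + r) = 1 := by
    have : (1 - x) * r = x := by rw [hrdef, mul_comm, div_mul_cancel₀ _ hq.ne']
    nlinarith [this]
  have hw1 : 1 < r ^ (1 - b) :=
    Real.one_lt_rpow_iff_of_pos (by linarith) |>.mpr (Or.inl ⟨hr1, by linarith⟩)
  have hwr : r ^ (1 - b) < r := rpow_lt_self' hr1 (by linarith)
  set w := r ^ (1 - b) with hwdef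
  set qq := (1 - x) ^ (1 - b) with hqqdef
  have hqq0 : 0 < qq := Real.rpow_pos_of_pos hq _
  have hsplit : x ^ (1 - b) = w * qq := by
    rw [hxr, Real.mul_rpow (by linarith) hq.le]
  rw [g, if_neg hne, hsplit]
  rw [show w * qq - qq = qq * (w - 1) by ring,
    show x * qq - (1 - x) * (w * qq) = (1 - x) * qq * (r - w) by linear_combination qq * hxr]
  rw [div_eq_div_iff (ne_of_gt (mul_pos (mul_pos hq hqq0) (by linarith)))
    (ne_of_gt (by linarith : (0:ℝ) < r - w))]
  linear_combination (-(qq * (w - 1) * (r - w))) * h1r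

/-- `g` is antitone in `b` on `(0,1)` for fixed `x ∈ (1/2,1)`. -/
lemma g_anti_b' {x b1 b2 : ℝ} (hx1 : 1 / 2 < x) (hx2 : x < 1)
    (hb10 : 0 < b1) (hb11 : b1 < 1) (hb20 : 0 < b2) (hb21 : b2 < 1) (hb : b1 ≤ b2) :
    g x b2 ≤ g x b1 := by
  have hq : 0 < 1 - x := by linarith
  rw [g_eq' hx1 hx2 hb10 hb11, g_eq' hx1 hx2 hb20 hb21]
  set r := x / (1 - x) with hrdef
  have hr1 : 1 < r := (one_lt_div hq).mpr (by linarith)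
  have hw1a : 1 < r ^ (1 - b1) :=
    Real.one_lt_rpow_iff_of_pos (by linarith) |>.mpr (Or.inl ⟨hr1, by linarith⟩)
  have hw1b : 1 < r ^ (1 - b2) :=
    Real.one_lt_rpow_iff_of_pos (by linarith) |>.mpr (Or.inl ⟨hr1, by linarith⟩)
  have hwra : r ^ (1 - b1) < r := rpow_lt_self' hr1 (by linarith)
  have hwrb : r ^ (1 - b2) < r := rpow_lt_self' hr1 (by linarith)
  have hle : r ^ (1 - b2) ≤ r ^ (1 - b1) :=
    Real.rpow_le_rpow_of_exponent_le hr1.le (by linarith)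
  set w1 := r ^ (1 - b1)
  set w2 := r ^ (1 - b2)
  rw [div_le_div_iff₀ (by linarith) (by linarith)]
  nlinarith [mul_nonneg (mul_nonneg (by linarith : (0:ℝ) ≤ 1 + r)
    (by linarith : (0:ℝ) ≤ r - 1)) (by linarith : (0:ℝ) ≤ w1 - w2)]

/-- `g` is strictly increasing in `x` on `(1/2,1)` for fixed `b ∈ (0,1)`. -/
lemma g_mono_x' {x y b : ℝ} (hx1 : 1 / 2 < x) (hy2 : y < 1) (hxy : x < y)
    (hb0 : 0 < b) (hb1 : b < 1) : g x b < g y b := by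
  have hx2 : x < 1 := lt_trans hxy hy2
  have hy1 : 1 / 2 < y := lt_trans hx1 hxy
  have hqx : 0 < 1 - x := by linarith
  have hqy : 0 < 1 - y := by linarith
  rw [g_eq' hx1 hx2 hb0 hb1, g_eq' hy1 hy2 hb0 hb1]
  have hrx : 1 < x / (1 - x) := (one_lt_div hqx).mpr (by linarith)
  have hry : 1 < y / (1 - y) := (one_lt_div hqy).mpr (by linarith)
  have hrlt : x / (1 - x) < y / (1 - y) := by
    rw [div_lt_div_iff₀ hqx hqy]; nlinarith
  exact G_strictMonoOn' (by linarith : (0:ℝ) < 1 - b) (by linarith)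
    (Set.mem_Ioi.mpr hrx) (Set.mem_Ioi.mpr hry) hrlt

/-- Lemma 2(iii), monotonicity part: the solution `x̂(φ,h,b)` of
`g(x,b) = φ(h-1)` in `(1/2,1)` is monotone increasing in each of `φ`, `h`, `b`
(for parameter triples in the moderate-bias range). -/
theorem stmt_8 (φ1 h1 b1 φ2 h2 b2 xhat1 xhat2 : ℝ)
    (hφ1 : 0 < φ1 ∧ φ1 ≤ 1) (hh1 : 1 < h1)
    (hb1 : 2 / (φ1 * (h1 - 1) + 2) < b1 ∧ b1 < 1)
    (hφ2 : 0 < φ2 ∧ φ2 ≤ 1) (hh2 : 1 < h2)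
    (hb2 : 2 / (φ2 * (h2 - 1) + 2) < b2 ∧ b2 < 1)
    (hxhat1 : xhat1 ∈ Set.Ioo (1 / 2 : ℝ) 1 ∧ g xhat1 b1 = φ1 * (h1 - 1))
    (hxhat2 : xhat2 ∈ Set.Ioo (1 / 2 : ℝ) 1 ∧ g xhat2 b2 = φ2 * (h2 - 1))
    (hφ : φ1 ≤ φ2) (hhle : h1 ≤ h2) (hble : b1 ≤ b2) :
    xhat1 ≤ xhat2 := by
  obtain ⟨⟨hx11, hx12⟩, he1⟩ := hxhat1
  obtain ⟨⟨hx21, hx22⟩, he2⟩ := hxhat2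
  have hb10 : 0 < b1 := by
    refine lt_trans ?_ hb1.1
    apply div_pos (by norm_num)
    nlinarith [hφ1.1, hh1]
  have hb20 : 0 < b2 := by
    refine lt_trans ?_ hb2.1
    apply div_pos (by norm_num)
    nlinarith [hφ2.1, hh2]
  by_contra hcon
  push_neg at hcon
  have hVle : φ1 * (h1 - 1) ≤ φ2 * (h2 - 1) := by
    apply mul_le_mul hφ (by linarith) (by linarith) (by linarith)
  have hlt : g xhat2 b1 < g xhat1 b1 := g_mono_x' hx21 hx12 hcon hb10 hb1.2
  have hle : g xhat2 b2 ≤ g xhat2 b1 := g_anti_b' hx21 hx22 hb10 hb1.2 hb20 hb2.2 hble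
  rw [he1] at hlt
  rw [he2] at hle
  linarith
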